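/- A real cubic binary form f(x,y) of degree 3 without multiple complex roots has real Waring rank 3 if and only if it has 3 distinct real roots; otherwise (one real and two complex conjugate roots) it has real Waring rank 2. -/

import Mathlib

open MvPolynomial

/-- The real linear binary form `p.1 * x + p.2 * y`. -/
noncomputable def lin (p : ℝ × ℝ) : MvPolynomial (Fin 2) ℝ :=
  C p.1 * X 0 + C p.2 * X 1

/-- A binary form `f` has `m` distinct real roots: it factors over `ℝ` into `m`
pairwise non-proportional (nonzero) real linear forms, up to a nonzero constant. -/
noncomputable def HasDistinctRealRoots (f : MvPolynomial (Fin 2) ℝ) (m : ℕ) : Prop :=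
  ∃ (c : ℝ) (l : Fin m → ℝ × ℝ), c ≠ 0 ∧ (∀ i, l i ≠ 0) ∧
    (∀ i j, i ≠ j → (l i).1 * (l j).2 - (l j).1 * (l i).2 ≠ 0) ∧
    f = C c * ∏ i, lin (l i)
/-- `f` admits a real Waring decomposition with `r` summands of `n`-th powers of
real linear forms. -/
noncomputable def WaringDecomp (f : MvPolynomial (Fin 2) ℝ) (n r : ℕ) : Prop :=
  ∃ (lam : Fin r → ℝ) (l : Fin r → ℝ × ℝ),
    f = ∑ i, C (lam i) * (lin (l i)) ^ n

/-- The real Waring rank of a binary form of degree `n`. -/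
noncomputable def RealRank (f : MvPolynomial (Fin 2) ℝ) (n : ℕ) : ℕ :=
  sInf {r | WaringDecomp f n r}

/-! ### Auxiliary lemmas -/

section Aux

lemma lin_zero : lin (0, 0) = 0 := by simp [lin]

lemma lin_smul (k : ℝ) (p : ℝ × ℝ) : lin (k * p.1, k * p.2) = C k * lin p := by
  simp only [lin, map_mul]; ring

lemma lin_add_smul (t : ℝ) (p q : ℝ × ℝ) :
    lin (p.1 + t * q.1, p.2 + t * q.2) = lin p + C t * lin q := by
  simp only [lin, map_add, map_mul]; ring

lemma lin_comb2 (s t : ℝ) (p q : ℝ × ℝ) :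
    lin (s * p.1 + t * q.1, s * p.2 + t * q.2) = C s * lin p + C t * lin q := by
  simp only [lin, map_add, map_mul]; ring

lemma eval_lin (x y : ℝ) (r : ℝ × ℝ) : eval ![x, y] (lin r) = r.1 * x + r.2 * y := by
  simp [lin]

/-- A square of a linear form dividing `f` contradicts squarefreeness over `ℂ`. -/
lemma kill (f g : MvPolynomial (Fin 2) ℝ) (r : ℝ × ℝ)
    (hsf : Squarefree (MvPolynomial.map (algebraMap ℝ ℂ) f))
    (h : f = (lin r)^2 * g) : False := by
  have hdvd : (MvPolynomial.map (algebraMap ℝ ℂ) (lin r)) *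
      (MvPolynomial.map (algebraMap ℝ ℂ) (lin r)) ∣ MvPolynomial.map (algebraMap ℝ ℂ) f := by
    refine ⟨MvPolynomial.map (algebraMap ℝ ℂ) g, ?_⟩
    rw [h]; rw [map_mul, map_pow]; ring
  have hu := hsf _ hdvd
  obtain ⟨v, hv⟩ := isUnit_iff_exists_inv.mp hu
  have := congrArg (eval (![(r.2 : ℂ), (-(r.1) : ℂ)])) hv
  simp only [map_mul, map_one] at this
  rw [eval_map] at this
  simp [lin, eval₂_add, eval₂_mul, eval₂_C, eval₂_X] at this
  rw [show ((r.1:ℂ) * r.2 + -((r.2:ℂ) * r.1)) = 0 by ring, zero_mul] at this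
  exact zero_ne_one this

lemma kill0 (f : MvPolynomial (Fin 2) ℝ)
    (hsf : Squarefree (MvPolynomial.map (algebraMap ℝ ℂ) f)) (h : f = 0) : False := by
  rw [h, map_zero] at hsf
  exact not_squarefree_zero hsf

lemma prop_of_det (p q : ℝ × ℝ) (hp : p ≠ 0) (hdet : p.1*q.2 - q.1*p.2 = 0) :
    ∃ k : ℝ, q = (k*p.1, k*p.2) := by
  rcases eq_or_ne p.1 0 with h1 | h1
  · have h2 : p.2 ≠ 0 := by
      intro h2; exact hp (Prod.ext h1 h2)
    refine ⟨q.2/p.2, ?_⟩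
    have : q.1 = q.2/p.2 * p.1 := by field_simp; nlinarith [hdet]
    exact Prod.ext this (by field_simp)
  · refine ⟨q.1/p.1, ?_⟩
    have : q.2 = q.1/p.1 * p.2 := by field_simp; nlinarith [hdet]
    exact Prod.ext (by field_simp) this

lemma mono_eq (i j : ℕ) (a : ℝ) : C a * (X (0:Fin 2) ^ i * X 1 ^ j)
    = monomial (Finsupp.single 0 i + Finsupp.single 1 j) a := by
  rw [X_pow_eq_monomial, X_pow_eq_monomial, monomial_mul, C_mul_monomial, mul_one, mul_one]

lemma deg2 (m : Fin 2 →₀ ℕ) : m.degree = m 0 + m 1 := by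
  have h := Finset.sum_subset (Finset.subset_univ m.support)
    (fun i _ hi => Finsupp.notMem_support_iff.mp hi)
  rw [Finsupp.degree_apply, h, Fin.sum_univ_two]

lemma std_form (f : MvPolynomial (Fin 2) ℝ) (hhom : f.IsHomogeneous 3) :
    ∃ a b c d : ℝ, f = C a * X 0^3 + C b * (X 0^2 * X 1) + C c * (X 0 * X 1^2) + C d * X 1^3 := by
  refine ⟨coeff (Finsupp.single 0 3 + Finsupp.single 1 0) f,
    coeff (Finsupp.single 0 2 + Finsupp.single 1 1) f,
    coeff (Finsupp.single 0 1 + Finsupp.single 1 2) f,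
    coeff (Finsupp.single 0 0 + Finsupp.single 1 3) f, ?_⟩
  have h1 : (X (0:Fin 2) : MvPolynomial (Fin 2) ℝ)^3 = X 0 ^3 * X 1 ^ 0 := by ring
  have h2 : (X (1:Fin 2) : MvPolynomial (Fin 2) ℝ)^3 = X 0 ^0 * X 1 ^ 3 := by ring
  have h3 : (X (0:Fin 2) : MvPolynomial (Fin 2) ℝ) * X 1 ^2 = X 0 ^1 * X 1 ^ 2 := by ring
  have h4 : (X (0:Fin 2) : MvPolynomial (Fin 2) ℝ)^2 * X 1 = X 0 ^2 * X 1 ^ 1 := by ring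
  rw [h1, h2, h3, h4, mono_eq, mono_eq, mono_eq, mono_eq]
  ext m
  have hm : m = Finsupp.single 0 (m 0) + Finsupp.single 1 (m 1) := by
    ext i; fin_cases i <;> simp [Finsupp.single_apply]
  have key : ∀ i j k l : ℕ, (Finsupp.single (0:Fin 2) i + Finsupp.single 1 j
      = Finsupp.single 0 k + Finsupp.single 1 l) ↔ (i = k ∧ j = l) := by
    intro i j k l
    constructor
    · intro h
      have h0 := DFunLike.congr_fun h 0
      have h1 := DFunLike.congr_fun h 1
      simp [Finsupp.single_apply] at h0 h1
      exact ⟨h0, h1⟩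
    · rintro ⟨rfl, rfl⟩; rfl
  by_cases hdeg : m 0 + m 1 = 3
  · have h0 : m 0 = 0 ∧ m 1 = 3 ∨ m 0 = 1 ∧ m 1 = 2 ∨ m 0 = 2 ∧ m 1 = 1 ∨ m 0 = 3 ∧ m 1 = 0 := by
      omega
    conv_lhs => rw [hm]
    conv_rhs => rw [hm]
    rcases h0 with ⟨ha,hb⟩|⟨ha,hb⟩|⟨ha,hb⟩|⟨ha,hb⟩ <;> rw [ha, hb] <;>
      simp only [coeff_add, coeff_monomial, key] <;> norm_num
  · have hz : coeff m f = 0 := by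
      apply hhom.coeff_eq_zero
      rw [deg2]; exact hdeg
    rw [hz]
    conv_rhs => rw [hm]
    simp only [coeff_add, coeff_monomial, key]
    have c1 : ¬(3 = m 0 ∧ 0 = m 1) := by omega
    have c2 : ¬(2 = m 0 ∧ 1 = m 1) := by omega
    have c3 : ¬(1 = m 0 ∧ 2 = m 1) := by omega
    have c4 : ¬(0 = m 0 ∧ 3 = m 1) := by omega
    simp [c1, c2, c3, c4]

lemma two_cubes (u w : MvPolynomial (Fin 2) ℝ) (A B C' l1 l2 s1 t1 s2 t2 : ℝ)
    (h0 : l1*s1^3 + l2*s2^3 = A) (h1 : 3*(l1*s1^2*t1 + l2*s2^2*t2) = B)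
    (h2 : 3*(l1*s1*t1^2 + l2*s2*t2^2) = C') (h3 : l1*t1^3 + l2*t2^3 = 0) :
    C A * u^3 + C B * (u^2*w) + C C' * (u*w^2)
      = C l1 * (C s1 * u + C t1 * w)^3 + C l2 * (C s2 * u + C t2 * w)^3 := by
  have key : C (l1*s1^3 + l2*s2^3) * u^3 + C (3*(l1*s1^2*t1 + l2*s2^2*t2)) * (u^2*w)
      + C (3*(l1*s1*t1^2 + l2*s2*t2^2)) * (u*w^2) + C (l1*t1^3 + l2*t2^3) * w^3
      = C l1 * (C s1 * u + C t1 * w)^3 + C l2 * (C s2 * u + C t2 * w)^3 := by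
    simp only [map_add, map_mul, map_pow, map_ofNat]
    ring
  rw [h0, h1, h2, h3] at key
  simpa using key

lemma three_cubes (u v : MvPolynomial (Fin 2) ℝ) (P Q l1 l2 l3 s : ℝ)
    (h0 : l1 + l3 = 0) (h1 : 3*(l3*s) = P) (h2 : 3*(l3*s^2) = Q) (h3 : l2 + l3*s^3 = 0) :
    C P * (u^2*v) + C Q * (u*v^2)
      = C l1 * u^3 + C l2 * v^3 + C l3 * (u + C s * v)^3 := by
  have key : C (l1 + l3) * u^3 + C (3*(l3*s)) * (u^2*v) + C (3*(l3*s^2)) * (u*v^2)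
      + C (l2 + l3*s^3) * v^3
      = C l1 * u^3 + C l2 * v^3 + C l3 * (u + C s * v)^3 := by
    simp only [map_add, map_mul, map_pow, map_ofNat]
    ring
  rw [h0, h1, h2, h3] at key
  simpa using key

lemma factor_form (p : ℝ × ℝ) (e g h a b c d : ℝ)
    (h1 : p.1*e = a) (h2 : p.1*g + p.2*e = b) (h3 : p.1*h + p.2*g = c) (h4 : p.2*h = d) :
    C a * X 0^3 + C b * (X 0^2 * X 1) + C c * (X 0 * X 1^2) + C d * X 1^3
      = lin p * (C e * X 0^2 + C g * (X 0 * X 1) + C h * X 1^2) := by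
  rw [← h1, ← h2, ← h3, ← h4]
  simp only [lin, map_add, map_mul]
  ring

lemma quad_factor (e g h : ℝ) (q1 q2 : ℝ × ℝ)
    (h1 : q1.1*q2.1 = e) (h2 : q1.1*q2.2 + q1.2*q2.1 = g) (h3 : q1.2*q2.2 = h) :
    (C e * X 0^2 + C g * (X 0 * X 1) + C h * X 1^2 : MvPolynomial (Fin 2) ℝ)
      = lin q1 * lin q2 := by
  rw [← h1, ← h2, ← h3]
  simp only [lin, map_add, map_mul]
  ring

lemma quad_square (e g h k : ℝ) (q : ℝ × ℝ)
    (h1 : k*q.1^2 = e) (h2 : 2*(k*(q.1*q.2)) = g) (h3 : k*q.2^2 = h) :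
    (C e * X 0^2 + C g * (X 0 * X 1) + C h * X 1^2 : MvPolynomial (Fin 2) ℝ)
      = C k * (lin q)^2 := by
  rw [← h1, ← h2, ← h3]
  simp only [lin, map_add, map_mul, map_pow, map_ofNat]
  ring

lemma cubic_root_monic (B C D : ℝ) : ∃ t : ℝ, t^3 + B*t^2 + C*t + D = 0 := by
  set g : ℝ → ℝ := fun t => t^3 + B*t^2 + C*t + D with hg
  set M : ℝ := 1 + |B| + |C| + |D| with hM
  have hM1 : 1 ≤ M := by
    have := abs_nonneg B; have := abs_nonneg C; have := abs_nonneg D; linarith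
  have hgM : 0 ≤ g M := by
    have hB : -|B| ≤ B := neg_abs_le B
    have hC : -|C| ≤ C := neg_abs_le C
    have hD : -|D| ≤ D := neg_abs_le D
    have h2 : M^2 ≥ M := by nlinarith
    have h3 : M^3 ≥ M^2 := by nlinarith
    simp only [hg]
    nlinarith [abs_nonneg B, abs_nonneg C, abs_nonneg D]
  have hgm : g (-M) ≤ 0 := by
    have hB : B ≤ |B| := le_abs_self B
    have hC : -|C| ≤ C := neg_abs_le C
    have hD : D ≤ |D| := le_abs_self D
    simp only [hg]
    nlinarith [abs_nonneg B, abs_nonneg C, abs_nonneg D]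
  have hcont : ContinuousOn g (Set.Icc (-M) M) := by
    apply Continuous.continuousOn; fun_prop
  have hle : (-M : ℝ) ≤ M := by linarith
  have := intermediate_value_Icc hle hcont
  have h0 : (0:ℝ) ∈ Set.Icc (g (-M)) (g M) := ⟨hgm, hgM⟩
  obtain ⟨t, _, ht⟩ := this h0
  exact ⟨t, ht⟩

lemma cubic_root (a b c d : ℝ) (ha : a ≠ 0) : ∃ t : ℝ, a*t^3 + b*t^2 + c*t + d = 0 := by
  obtain ⟨t, ht⟩ := cubic_root_monic (b/a) (c/a) (d/a)
  refine ⟨t, ?_⟩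
  have h : a*t^3 + b*t^2 + c*t + d = a*(t^3 + b/a*t^2 + c/a*t + d/a) := by
    field_simp
  rw [h, ht, mul_zero]

lemma solve_two (A B C : ℝ) (hdisc : B^2 - 4*A*C < 0) :
    ∃ l1 l2 s1 t1 s2 t2 : ℝ,
      (l1*s1^3 + l2*s2^3 = A) ∧ (3*(l1*s1^2*t1 + l2*s2^2*t2) = B) ∧
      (3*(l1*s1*t1^2 + l2*s2*t2^2) = C) ∧ (l1*t1^3 + l2*t2^3 = 0) := by
  have hC : C ≠ 0 := by intro h; rw [h] at hdisc; nlinarith [sq_nonneg B]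
  have hAC : 0 < 4*A*C - B^2 := by nlinarith
  have hC2 : 0 < C^2 := by rcases hC.lt_or_gt with h|h <;> nlinarith
  by_cases hD : 3*A*C - B^2 = 0
  · have hA : A ≠ 0 := by
      intro h; rw [h] at hD; simp at hD; rw [h, hD] at hdisc; norm_num at hdisc
    have hB2 : B^2 = 3*A*C := by linarith
    refine ⟨A, -(A*(B/(3*A))^3), 1, B/(3*A), 0, 1, by ring, by field_simp; ring, ?_, by ring⟩
    field_simp
    linear_combination (3*A)*hB2
  · have hex : ∃ t1 t2 : ℝ, t1 ≠ t2 ∧ (3*A*C-B^2)*(t1+t2) = -(B*C)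
        ∧ (3*A*C-B^2)*(t1*t2) = -C^2 := by
      have hD0 : 0 < 3*C^2*(4*A*C - B^2)/(3*A*C-B^2)^2 := by
        apply div_pos (by nlinarith) (by positivity)
      have hsq : (Real.sqrt (3*C^2*(4*A*C - B^2)/(3*A*C-B^2)^2))^2
          = 3*C^2*(4*A*C - B^2)/(3*A*C-B^2)^2 := Real.sq_sqrt hD0.le
      have hR0 : Real.sqrt (3*C^2*(4*A*C - B^2)/(3*A*C-B^2)^2) ≠ 0 := by
        intro h; rw [h] at hsq; simp at hsq; exact absurd hsq.symm (ne_of_gt hD0)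
      set R := Real.sqrt (3*C^2*(4*A*C - B^2)/(3*A*C-B^2)^2)
      refine ⟨(-(B*C)/(3*A*C-B^2) + R)/2, (-(B*C)/(3*A*C-B^2) - R)/2, ?_, ?_, ?_⟩
      · intro h; apply hR0; linarith
      · field_simp; ring
      · have hexp : ((-(B*C)/(3*A*C-B^2) + R)/2) * ((-(B*C)/(3*A*C-B^2) - R)/2)
            = ((-(B*C)/(3*A*C-B^2))^2 - R^2)/4 := by ring
        rw [hexp, hsq]
        field_simp
        ring
    obtain ⟨t1, t2, hne12, hS, hP⟩ := hex
    have hne : t2 - t1 ≠ 0 := sub_ne_zero_of_ne (Ne.symm hne12)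
    refine ⟨(A*t2 - B/3)/(t2 - t1), (B/3 - A*t1)/(t2 - t1), 1, t1, 1, t2, ?_, ?_, ?_, ?_⟩
    · field_simp; ring
    · field_simp; ring
    · have hval : 3*((A*t2 - B/3)/(t2 - t1)*1*t1^2 + (B/3 - A*t1)/(t2 - t1)*1*t2^2)
          = -3*A*(t1*t2) + B*(t1+t2) := by field_simp; ring
      have key : (3*A*C-B^2) * (3*((A*t2 - B/3)/(t2 - t1)*1*t1^2 + (B/3 - A*t1)/(t2 - t1)*1*t2^2))
          = (3*A*C-B^2) * C := by
        rw [hval]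
        linear_combination B*hS + (-3*A)*hP
      exact mul_left_cancel₀ hD key
    · have hval : (A*t2 - B/3)/(t2 - t1)*t1^3 + (B/3 - A*t1)/(t2 - t1)*t2^3
          = -A*(t1*t2)*(t1+t2) + (B/3)*((t1+t2)^2 - t1*t2) := by field_simp; ring
      have key : (3*A*C-B^2)^2 * ((A*t2 - B/3)/(t2 - t1)*t1^3 + (B/3 - A*t1)/(t2 - t1)*t2^3)
          = (3*A*C-B^2)^2 * 0 := by
        rw [hval]
        linear_combination ((-A)*((3*A*C-B^2)*(t1*t2)) + (B/3)*((3*A*C-B^2)*(t1+t2)) - B^2*C/3) * hS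
          + (A*B*C - B*(3*A*C-B^2)/3) * hP
      exact mul_left_cancel₀ (pow_ne_zero 2 hD) key

end Aux

section Mid

lemma no_decomp0 (f : MvPolynomial (Fin 2) ℝ)
    (hsf : Squarefree (MvPolynomial.map (algebraMap ℝ ℂ) f)) : ¬ WaringDecomp f 3 0 := by
  rintro ⟨lam, l, hf⟩
  simp at hf
  exact kill0 f hsf hf

lemma no_decomp1 (f : MvPolynomial (Fin 2) ℝ)
    (hsf : Squarefree (MvPolynomial.map (algebraMap ℝ ℂ) f)) : ¬ WaringDecomp f 3 1 := by
  rintro ⟨lam, l, hf⟩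
  rw [Fin.sum_univ_one] at hf
  exact kill f (C (lam 0) * lin (l 0)) (l 0) hsf (by rw [hf]; ring)

lemma decomp3_of_distinct (f : MvPolynomial (Fin 2) ℝ)
    (hd : HasDistinctRealRoots f 3) : WaringDecomp f 3 3 := by
  obtain ⟨c, l, hc, hl0, hld, hf⟩ := hd
  rw [Fin.prod_univ_three] at hf
  have hdne : (l 0).1*(l 1).2 - (l 1).1*(l 0).2 ≠ 0 := hld 0 1 (by decide)
  have hαne : ((l 2).1*(l 1).2 - (l 1).1*(l 2).2) / ((l 0).1*(l 1).2 - (l 1).1*(l 0).2) ≠ 0 :=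
    div_ne_zero (hld 2 1 (by decide)) hdne
  have hβne : ((l 0).1*(l 2).2 - (l 2).1*(l 0).2) / ((l 0).1*(l 1).2 - (l 1).1*(l 0).2) ≠ 0 :=
    div_ne_zero (hld 0 2 (by decide)) hdne
  obtain ⟨α, hα⟩ : ∃ x : ℝ, x = ((l 2).1*(l 1).2 - (l 1).1*(l 2).2)
      / ((l 0).1*(l 1).2 - (l 1).1*(l 0).2) := ⟨_, rfl⟩
  obtain ⟨β, hβ⟩ : ∃ x : ℝ, x = ((l 0).1*(l 2).2 - (l 2).1*(l 0).2)
      / ((l 0).1*(l 1).2 - (l 1).1*(l 0).2) := ⟨_, rfl⟩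
  rw [← hα] at hαne
  rw [← hβ] at hβne
  have hα1 : α*(l 0).1 + β*(l 1).1 = (l 2).1 := by rw [hα, hβ]; rw [div_mul_eq_mul_div, div_mul_eq_mul_div, ← add_div, div_eq_iff hdne]; ring
  have hα2 : α*(l 0).2 + β*(l 1).2 = (l 2).2 := by rw [hα, hβ]; rw [div_mul_eq_mul_div, div_mul_eq_mul_div, ← add_div, div_eq_iff hdne]; ring
  have hpair : l 2 = (α*(l 0).1 + β*(l 1).1, α*(l 0).2 + β*(l 1).2) :=
    Prod.ext hα1.symm hα2.symm
  have hlin2 : lin (l 2) = C α * lin (l 0) + C β * lin (l 1) := by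
    rw [hpair]; exact lin_comb2 α β (l 0) (l 1)
  have hmain : f = C (c*α) * ((lin (l 0))^2 * lin (l 1)) + C (c*β) * (lin (l 0) * (lin (l 1))^2) := by
    rw [hf, hlin2]; simp only [map_mul]; ring
  have happ := three_cubes (lin (l 0)) (lin (l 1)) (c*α) (c*β)
    (-(c*α^2/(3*β))) (-(c*α^2/(3*β))*(β/α)^3) (c*α^2/(3*β)) (β/α)
    (by ring) (by field_simp) (by field_simp) (by ring)
  refine ⟨![-(c*α^2/(3*β)), -(c*α^2/(3*β))*(β/α)^3, c*α^2/(3*β)],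
    ![l 0, l 1, ((l 0).1 + (β/α)*(l 1).1, (l 0).2 + (β/α)*(l 1).2)], ?_⟩
  rw [Fin.sum_univ_three]
  simp only [Matrix.cons_val_zero, Matrix.cons_val_one, Matrix.head_cons,
    Matrix.cons_val_two, Matrix.tail_cons]
  rw [lin_add_smul]
  rw [hmain, ← happ]

lemma no_decomp2_of_distinct (f : MvPolynomial (Fin 2) ℝ)
    (hsf : Squarefree (MvPolynomial.map (algebraMap ℝ ℂ) f))
    (hd : HasDistinctRealRoots f 3) : ¬ WaringDecomp f 3 2 := by
  rintro ⟨lam, ll, hf2⟩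
  rw [Fin.sum_univ_two] at hf2
  obtain ⟨c, k, hc, hk0, hkd, hfd⟩ := hd
  rw [Fin.prod_univ_three] at hfd
  rcases eq_or_ne (lam 0) 0 with h0 | h0
  · exact kill f (C (lam 1) * lin (ll 1)) (ll 1) hsf
      (by rw [hf2, h0, map_zero]; ring)
  rcases eq_or_ne (lam 1) 0 with h1 | h1
  · exact kill f (C (lam 0) * lin (ll 0)) (ll 0) hsf
      (by rw [hf2, h1, map_zero]; ring)
  rcases eq_or_ne ((ll 0).1*(ll 1).2 - (ll 1).1*(ll 0).2) 0 with hdet | hdet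
  · rcases eq_or_ne (ll 0) 0 with hz | hz
    · have hlz : lin (ll 0) = 0 := by rw [hz]; simp [lin]
      exact kill f (C (lam 1) * lin (ll 1)) (ll 1) hsf (by rw [hf2, hlz]; ring)
    · obtain ⟨kk, hkk⟩ := prop_of_det (ll 0) (ll 1) hz hdet
      have hlin : lin (ll 1) = C kk * lin (ll 0) := by rw [hkk]; exact lin_smul kk (ll 0)
      exact kill f ((C (lam 0) + C (lam 1) * (C kk)^3) * lin (ll 0)) (ll 0) hsf
        (by rw [hf2, hlin]; ring)
  · -- evaluation argument
    have hev : ∀ x y : ℝ, eval ![x,y] f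
        = lam 0 * ((ll 0).1*x + (ll 0).2*y)^3 + lam 1 * ((ll 1).1*x + (ll 1).2*y)^3 := by
      intro x y
      rw [hf2]
      simp only [map_add, map_mul, map_pow, eval_C, eval_lin]
    have hev2 : ∀ x y : ℝ, eval ![x,y] f
        = c * (((k 0).1*x + (k 0).2*y) * (((k 1).1*x + (k 1).2*y) * ((k 2).1*x + (k 2).2*y))) := by
      intro x y
      rw [hfd]
      simp only [map_mul, eval_C, eval_lin]
      ring
    have hz0 : eval ![(k 0).2, -(k 0).1] f = 0 := by
      rw [hev2]
      rw [show (k 0).1*(k 0).2 + (k 0).2*(-(k 0).1) = 0 by ring]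
      ring
    have hz1 : eval ![(k 1).2, -(k 1).1] f = 0 := by
      rw [hev2]
      rw [show (k 1).1*(k 1).2 + (k 1).2*(-(k 1).1) = 0 by ring]
      ring
    obtain ⟨s0, hs0⟩ : ∃ x : ℝ, x = (ll 0).1*(k 0).2 + (ll 0).2*(-(k 0).1) := ⟨_, rfl⟩
    obtain ⟨t0, ht0⟩ : ∃ x : ℝ, x = (ll 1).1*(k 0).2 + (ll 1).2*(-(k 0).1) := ⟨_, rfl⟩
    obtain ⟨s1, hs1⟩ : ∃ x : ℝ, x = (ll 0).1*(k 1).2 + (ll 0).2*(-(k 1).1) := ⟨_, rfl⟩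
    obtain ⟨t1, ht1⟩ : ∃ x : ℝ, x = (ll 1).1*(k 1).2 + (ll 1).2*(-(k 1).1) := ⟨_, rfl⟩
    have E0 : lam 0 * s0^3 + lam 1 * t0^3 = 0 := by
      rw [hs0, ht0, ← hev (k 0).2 (-(k 0).1), hz0]
    have E1 : lam 0 * s1^3 + lam 1 * t1^3 = 0 := by
      rw [hs1, ht1, ← hev (k 1).2 (-(k 1).1), hz1]
    have hcube : lam 0 * (s0*t1)^3 = lam 0 * (s1*t0)^3 := by
      linear_combination t1^3 * E0 - t0^3 * E1
    have hkey : (s0*t1)^3 = (s1*t0)^3 := mul_left_cancel₀ h0 hcube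
    have hinj : s0*t1 = s1*t0 :=
      ((Odd.strictMono_pow (R := ℝ) (⟨1, by norm_num⟩ : Odd 3)).injective) hkey
    have hid : s0*t1 - s1*t0
        = ((ll 0).1*(ll 1).2 - (ll 1).1*(ll 0).2) * ((k 0).1*(k 1).2 - (k 1).1*(k 0).2) := by
      rw [hs0, ht0, hs1, ht1]; ring
    have hne2 : ((ll 0).1*(ll 1).2 - (ll 1).1*(ll 0).2) * ((k 0).1*(k 1).2 - (k 1).1*(k 0).2) ≠ 0 :=
      mul_ne_zero hdet (hkd 0 1 (by decide))
    exact hne2 (by rw [← hid, hinj, sub_self])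

lemma factors_contra (f : MvPolynomial (Fin 2) ℝ)
    (hsf : Squarefree (MvPolynomial.map (algebraMap ℝ ℂ) f))
    (hnd : ¬ HasDistinctRealRoots f 3) (r0 r1 r2 : ℝ × ℝ)
    (hf : f = lin r0 * lin r1 * lin r2) : False := by
  rcases eq_or_ne r0 0 with h|hr0
  · exact kill0 f hsf (by rw [hf, h, show lin (0:ℝ×ℝ) = 0 by simp [lin]]; ring)
  rcases eq_or_ne r1 0 with h|hr1
  · exact kill0 f hsf (by rw [hf, h, show lin (0:ℝ×ℝ) = 0 by simp [lin]]; ring)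
  rcases eq_or_ne r2 0 with h|hr2
  · exact kill0 f hsf (by rw [hf, h, show lin (0:ℝ×ℝ) = 0 by simp [lin]]; ring)
  rcases eq_or_ne (r0.1*r1.2 - r1.1*r0.2) 0 with hd01|hd01
  · obtain ⟨kk, hkk⟩ := prop_of_det r0 r1 hr0 hd01
    exact kill f (C kk * lin r2) r0 hsf (by rw [hf, hkk, lin_smul]; ring)
  rcases eq_or_ne (r0.1*r2.2 - r2.1*r0.2) 0 with hd02|hd02
  · obtain ⟨kk, hkk⟩ := prop_of_det r0 r2 hr0 hd02
    exact kill f (C kk * lin r1) r0 hsf (by rw [hf, hkk, lin_smul]; ring)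
  rcases eq_or_ne (r1.1*r2.2 - r2.1*r1.2) 0 with hd12|hd12
  · obtain ⟨kk, hkk⟩ := prop_of_det r1 r2 hr1 hd12
    exact kill f (C kk * lin r0) r1 hsf (by rw [hf, hkk, lin_smul]; ring)
  apply hnd
  refine ⟨1, ![r0, r1, r2], one_ne_zero, ?_, ?_, ?_⟩
  · intro i; fin_cases i <;> simpa
  · intro i j hij
    fin_cases i <;> fin_cases j <;> simp_all <;>
      (intro hcon; first
        | exact hd01 (by linarith)
        | exact hd02 (by linarith)
        | exact hd12 (by linarith))
  · rw [Fin.prod_univ_three]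
    simp only [Matrix.cons_val_zero, Matrix.cons_val_one, Matrix.head_cons,
      Matrix.cons_val_two, Matrix.tail_cons, map_one, one_mul]
    exact hf

end Mid

section Final

lemma decomp2_of_not_distinct (f : MvPolynomial (Fin 2) ℝ)
    (hhom : f.IsHomogeneous 3)
    (hsf : Squarefree (MvPolynomial.map (algebraMap ℝ ℂ) f))
    (hnd : ¬ HasDistinctRealRoots f 3) : WaringDecomp f 3 2 := by
  obtain ⟨a, b, c, d, hstd⟩ := std_form f hhom
  have hfact : ∃ p : ℝ × ℝ, ∃ e g h : ℝ, 0 < p.1^2 + p.2^2 ∧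
      f = lin p * (C e * X 0^2 + C g * (X 0 * X 1) + C h * X 1^2) := by
    rcases eq_or_ne a 0 with ha | ha
    · refine ⟨(0,1), b, c, d, by norm_num, ?_⟩
      rw [hstd]
      refine factor_form (0,1) b c d a b c d ?_ ?_ ?_ ?_
      · simp [ha]
      · simp
      · simp
      · simp
    · obtain ⟨t, ht⟩ := cubic_root a b c d ha
      refine ⟨(1, -t), a, b + a*t, c + (b + a*t)*t, by show (0:ℝ) < (1:ℝ)^2 + (-t)^2; nlinarith [sq_nonneg t], ?_⟩
      rw [hstd]
      refine factor_form (1,-t) a (b+a*t) (c+(b+a*t)*t) a b c d ?_ ?_ ?_ ?_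
      · simp
      · simp; ring
      · simp; ring
      · simp; linear_combination -ht
  obtain ⟨p, e, g, h, hn, hfq⟩ := hfact
  rcases lt_trichotomy (g^2 - 4*e*h) 0 with hlt | heq | hgt
  · -- negative discriminant: build the 2-cube decomposition
    have hneg : (-2*e*(p.1*p.2) + g*(p.1^2 - p.2^2) + 2*h*(p.1*p.2))^2
        - 4*(e*p.1^2 + g*(p.1*p.2) + h*p.2^2)*(e*p.2^2 - g*(p.1*p.2) + h*p.1^2) < 0 := by
      have hdisc2 : (-2*e*(p.1*p.2) + g*(p.1^2 - p.2^2) + 2*h*(p.1*p.2))^2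
          - 4*(e*p.1^2 + g*(p.1*p.2) + h*p.2^2)*(e*p.2^2 - g*(p.1*p.2) + h*p.1^2)
          = (p.1^2+p.2^2)^2 * (g^2 - 4*e*h) := by ring
      rw [hdisc2]
      exact mul_neg_of_pos_of_neg (by positivity) hlt
    obtain ⟨l1, l2, s1, t1, s2, t2, e1, e2, e3, e4⟩ :=
      solve_two (e*p.1^2 + g*(p.1*p.2) + h*p.2^2)
        (-2*e*(p.1*p.2) + g*(p.1^2 - p.2^2) + 2*h*(p.1*p.2))
        (e*p.2^2 - g*(p.1*p.2) + h*p.1^2) hneg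
    have hkey : C ((p.1^2+p.2^2)^2) * f
        = C (e*p.1^2 + g*(p.1*p.2) + h*p.2^2) * (lin p)^3
          + C (-2*e*(p.1*p.2) + g*(p.1^2 - p.2^2) + 2*h*(p.1*p.2)) * ((lin p)^2 * lin (-p.2, p.1))
          + C (e*p.2^2 - g*(p.1*p.2) + h*p.1^2) * (lin p * (lin (-p.2, p.1))^2) := by
      have hw : lin (-p.2, p.1) = C (-p.2) * X 0 + C p.1 * X 1 := rfl
      rw [hfq, hw]
      simp only [lin, map_add, map_sub, map_mul, map_pow, map_neg, map_ofNat]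
      ring
    rw [two_cubes (lin p) (lin (-p.2, p.1)) _ _ _ l1 l2 s1 t1 s2 t2 e1 e2 e3 e4] at hkey
    have hm1 : C s1 * lin p + C t1 * lin (-p.2, p.1)
        = lin (s1*p.1 + t1*(-p.2), s1*p.2 + t1*p.1) := (lin_comb2 s1 t1 p (-p.2, p.1)).symm
    have hm2 : C s2 * lin p + C t2 * lin (-p.2, p.1)
        = lin (s2*p.1 + t2*(-p.2), s2*p.2 + t2*p.1) := (lin_comb2 s2 t2 p (-p.2, p.1)).symm
    rw [hm1, hm2] at hkey
    refine ⟨![l1/((p.1^2+p.2^2)^2), l2/((p.1^2+p.2^2)^2)],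
      ![(s1*p.1 + t1*(-p.2), s1*p.2 + t1*p.1), (s2*p.1 + t2*(-p.2), s2*p.2 + t2*p.1)], ?_⟩
    rw [Fin.sum_univ_two]
    simp only [Matrix.cons_val_zero, Matrix.cons_val_one, Matrix.head_cons]
    have hCn : (C ((p.1^2+p.2^2)^2) : MvPolynomial (Fin 2) ℝ) ≠ 0 := by
      rw [MvPolynomial.C_ne_zero]
      positivity
    apply mul_left_cancel₀ hCn
    rw [hkey, mul_add, ← mul_assoc, ← mul_assoc, ← map_mul, ← map_mul]
    have hc1 : (p.1^2+p.2^2)^2 * (l1/((p.1^2+p.2^2)^2)) = l1 := by field_simp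
    have hc2 : (p.1^2+p.2^2)^2 * (l2/((p.1^2+p.2^2)^2)) = l2 := by field_simp
    rw [hc1, hc2]
  · -- zero discriminant: square factor, contradiction with squarefree
    exfalso
    rcases eq_or_ne e 0 with he | he
    · have hg : g = 0 := by
        rw [he] at heq
        exact pow_eq_zero_iff two_ne_zero |>.mp (by linarith)
      exact kill f (C h * lin p) (0,1) hsf
        (by rw [hfq, he, hg, map_zero]
            rw [show lin ((0:ℝ),(1:ℝ)) = C 0 * X 0 + C 1 * X 1 from rfl]
            simp only [map_zero, map_one]
            ring)
    · have hq : (C e * X 0^2 + C g * (X 0 * X 1) + C h * X 1^2 : MvPolynomial (Fin 2) ℝ)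
          = C (1/e) * (lin (e, g/2))^2 :=
        quad_square e g h (1/e) (e, g/2) (by field_simp; try ring) (by field_simp; try ring)
          (by field_simp; nlinarith)
      exact kill f (C (1/e) * lin p) (e, g/2) hsf (by rw [hfq, hq]; ring)
  · -- positive discriminant: three real linear factors, contradiction
    exfalso
    rcases eq_or_ne e 0 with he | he
    · have hq : (C e * X 0^2 + C g * (X 0 * X 1) + C h * X 1^2 : MvPolynomial (Fin 2) ℝ)
          = lin (0,1) * lin (g,h) :=
        quad_factor e g h (0,1) (g,h) (by simp [he]) (by simp) (by simp)
      exact factors_contra f hsf hnd p (0,1) (g,h) (by rw [hfq, hq]; ring)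
    · obtain ⟨R, hRsq⟩ : ∃ R : ℝ, R^2 = g^2 - 4*e*h := ⟨Real.sqrt _, Real.sq_sqrt hgt.le⟩
      have hq : (C e * X 0^2 + C g * (X 0 * X 1) + C h * X 1^2 : MvPolynomial (Fin 2) ℝ)
          = lin (e, -(e*((-g+R)/(2*e)))) * lin (1, -((-g-R)/(2*e))) :=
        quad_factor e g h _ _ (by norm_num) (by field_simp; ring)
          (by field_simp; linear_combination (-1)*hRsq)
      exact factors_contra f hsf hnd p (e, -(e*((-g+R)/(2*e)))) (1, -((-g-R)/(2*e))) (by rw [hfq, hq]; ring)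

lemma rank_eq (f : MvPolynomial (Fin 2) ℝ) (r : ℕ) (hr : WaringDecomp f 3 r)
    (hlt : ∀ m, m < r → ¬ WaringDecomp f 3 m) : RealRank f 3 = r := by
  refine le_antisymm (Nat.sInf_le hr) ?_
  refine le_csInf ⟨r, hr⟩ ?_
  intro m hm
  by_contra hlt2
  exact hlt m (not_le.mp hlt2) hm

end Final

theorem stmt_19 (f : MvPolynomial (Fin 2) ℝ)
    (hhom : f.IsHomogeneous 3)
    (hsf : Squarefree (MvPolynomial.map (algebraMap ℝ ℂ) f)) :
    (RealRank f 3 = 3 ↔ HasDistinctRealRoots f 3) ∧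
    (¬ HasDistinctRealRoots f 3 → RealRank f 3 = 2) := by
  have hno0 := no_decomp0 f hsf
  have hno1 := no_decomp1 f hsf
  have hrank2 : ¬ HasDistinctRealRoots f 3 → RealRank f 3 = 2 := by
    intro hnd
    refine rank_eq f 2 (decomp2_of_not_distinct f hhom hsf hnd) ?_
    intro m hm
    interval_cases m
    · exact hno0
    · exact hno1
  constructor
  · constructor
    · intro hr3
      by_contra hnd
      rw [hrank2 hnd] at hr3
      norm_num at hr3
    · intro hd
      refine rank_eq f 3 (decomp3_of_distinct f hd) ?_
      intro m hm
      interval_cases m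
      · exact hno0
      · exact hno1
      · exact no_decomp2_of_distinct f hsf hd
  · exact hrank2
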